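/- (Abstract Kummer congruence criterion) Let {f_i} be a dense system of continuous functions in C(Z_p^×, O_{C_p}) and {a_i} ⊂ O_{C_p} a system of elements. Then there exists a p-adic measure μ : C(Z_p^×, O_{C_p}) → O_{C_p} with ∫ f_i dμ = a_i for all i if and only if the following Kummer congruences hold: for every choice of elements b_i ∈ C_p, almost all zero, if Σ_i b_i f_i(y) ∈ p^m O_{C_p} for all y ∈ Z_p^×, then Σ_i b_i a_i ∈ p^m O_{C_p}. -/

import Mathlib

set_option maxHeartbeats 1000000

theorem padicUnitsCompact (p : ℕ) [Fact p.Prime] : CompactSpace ℤ_[p]ˣ := by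
  have hrange : Set.range (Units.embedProduct ℤ_[p]) =
      {z : ℤ_[p] × ℤ_[p]ᵐᵒᵖ | z.1 * z.2.unop = 1} := by
    ext z
    constructor
    · rintro ⟨u, rfl⟩
      simp [Units.embedProduct]
    · intro h
      refine ⟨Units.mkOfMulEqOne z.1 z.2.unop h, ?_⟩
      simp [Units.embedProduct, Units.mkOfMulEqOne]
  haveI : CompactSpace ℤ_[p]ᵐᵒᵖ := MulOpposite.opHomeomorph.compactSpace
  have hclosed : IsClosed (Set.range (Units.embedProduct ℤ_[p])) := by
    rw [hrange]
    exact isClosed_eq (continuous_fst.mul (MulOpposite.continuous_unop.comp continuous_snd))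
      continuous_const
  have hcomp : IsCompact (Set.range (Units.embedProduct ℤ_[p])) := hclosed.isCompact
  constructor
  rw [Units.isEmbedding_embedProduct.isCompact_iff, Set.image_univ]
  exact hcomp

theorem kummer_zpow_aux {P : ℝ} (hP : 0 < P) (m : ℤ) (x : ℝ) :
    P ^ m * x ≤ 1 ↔ x ≤ P ^ (-m) := by
  have h1 : (0:ℝ) < P ^ m := zpow_pos hP m
  rw [zpow_neg, ← one_div, le_div_iff₀ h1, mul_comm]

theorem stmt10_aux (p : ℕ) [Fact p.Prime] {K : Type*} [NontriviallyNormedField K]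
    [IsUltrametricDist K] [CompleteSpace K] [Algebra ℚ_[p] K]
    (halg : IsAlgClosed K)
    (hnorm : ∀ x : ℚ_[p], ‖algebraMap ℚ_[p] K x‖ = ‖x‖)
    {I : Type*} (f : I → C(ℤ_[p]ˣ, K)) (a : I → K)
    (hf1 : ∀ i x, ‖f i x‖ ≤ 1) (ha1 : ∀ i, ‖a i‖ ≤ 1)
    (hdense : Dense (↑(Submodule.span K (Set.range f)) : Set C(ℤ_[p]ˣ, K))) :
    (∃ μ : C(ℤ_[p]ˣ, K) →ₗ[K] K,
        (∀ g : C(ℤ_[p]ˣ, K), (∀ x, ‖g x‖ ≤ 1) → ‖μ g‖ ≤ 1) ∧ ∀ i, μ (f i) = a i)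
    ↔ (∀ (m : ℕ) (b : I →₀ K),
        (∀ y : ℤ_[p]ˣ, ‖∑ i ∈ b.support, b i * f i y‖ ≤ (p : ℝ) ^ (-(m : ℤ))) →
        ‖∑ i ∈ b.support, b i * a i‖ ≤ (p : ℝ) ^ (-(m : ℤ))) := by
  haveI : CompactSpace ℤ_[p]ˣ := padicUnitsCompact p
  classical
  have hp1 : (1:ℝ) < (p:ℝ) := by exact_mod_cast (Fact.out : p.Prime).one_lt
  have hp0 : (0:ℝ) < (p:ℝ) := lt_trans one_pos hp1
  set T : (I →₀ K) →ₗ[K] C(ℤ_[p]ˣ, K) := Finsupp.linearCombination K f with hT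
  set A : (I →₀ K) →ₗ[K] K := Finsupp.linearCombination K a with hA
  have hTapp : ∀ (b : I →₀ K) (y : ℤ_[p]ˣ), (T b) y = ∑ i ∈ b.support, b i * f i y := by
    intro b y
    rw [hT, Finsupp.linearCombination_apply, Finsupp.sum]
    simp [smul_eq_mul]
  have hAapp : ∀ b : I →₀ K, A b = ∑ i ∈ b.support, b i * a i := by
    intro b
    rw [hA, Finsupp.linearCombination_apply, Finsupp.sum]
    simp [smul_eq_mul]
  have hcnorm : ∀ m : ℤ, ‖algebraMap ℚ_[p] K ((p:ℚ_[p]) ^ m)‖ = (p:ℝ) ^ (-m) := fun m => by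
    rw [hnorm, Padic.norm_p_zpow]
  have hcne : ∀ m : ℤ, algebraMap ℚ_[p] K ((p:ℚ_[p]) ^ m) ≠ 0 := by
    intro m h
    have h2 := hcnorm m
    rw [h, norm_zero] at h2
    exact (zpow_pos hp0 (-m)).ne h2
  constructor
  · rintro ⟨μ, hμ1, hμf⟩ m b hb
    have key : ∀ g : C(ℤ_[p]ˣ, K), (∀ y, ‖g y‖ ≤ (p:ℝ)^(-(m:ℤ))) →
        ‖μ g‖ ≤ (p:ℝ)^(-(m:ℤ)) := by
      intro g hg
      set c := algebraMap ℚ_[p] K ((p:ℚ_[p]) ^ (-(m:ℤ))) with hc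
      have h1 : ∀ y, ‖(c • g) y‖ ≤ 1 := by
        intro y
        rw [ContinuousMap.smul_apply, norm_smul, hcnorm, neg_neg]
        rw [kummer_zpow_aux hp0]
        exact hg y
      have h2 := hμ1 _ h1
      rw [map_smul, norm_smul, hcnorm, neg_neg, kummer_zpow_aux hp0] at h2
      exact h2
    have hgb : μ (T b) = A b := by
      rw [hT, Finsupp.apply_linearCombination, hA]
      rw [show (⇑μ ∘ f) = a from funext hμf]
    have h3 := key (T b) (fun y => by rw [hTapp]; exact hb y)
    rw [hgb, hAapp] at h3
    exact h3
  · intro hK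
    have hKz : ∀ (m : ℤ) (b : I →₀ K),
        (∀ y : ℤ_[p]ˣ, ‖∑ i ∈ b.support, b i * f i y‖ ≤ (p:ℝ) ^ (-m)) →
        ‖∑ i ∈ b.support, b i * a i‖ ≤ (p:ℝ) ^ (-m) := by
      intro m b hb
      set c := algebraMap ℚ_[p] K ((p:ℚ_[p]) ^ (-m)) with hc
      have hsupp : (c • b).support = b.support := Finsupp.support_smul_eq (hcne (-m))
      have hsum : ∀ (v : I → K), ∑ i ∈ (c • b).support, (c • b) i * v i
          = c * ∑ i ∈ b.support, b i * v i := by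
        intro v
        rw [hsupp, Finset.mul_sum]
        refine Finset.sum_congr rfl fun i _ => ?_
        rw [Finsupp.smul_apply, smul_eq_mul, mul_assoc]
      have h0 := hK 0 (c • b) ?_
      · rw [hsum a, norm_mul, hcnorm, neg_neg] at h0
        rw [← kummer_zpow_aux hp0]
        calc (p:ℝ) ^ m * ‖∑ i ∈ b.support, b i * a i‖
            ≤ (p:ℝ) ^ (-(0:ℤ)) := by simpa using h0
          _ ≤ 1 := by norm_num
      · intro y
        rw [hsum (fun i => f i y), norm_mul, hcnorm, neg_neg]
        have := hb y
        rw [← kummer_zpow_aux hp0] at this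
        simpa using this
    -- kernel inclusion
    have hker : LinearMap.ker T ≤ LinearMap.ker A := by
      intro b hb
      rw [LinearMap.mem_ker] at hb ⊢
      have hz : ∀ m : ℤ, ‖A b‖ ≤ (p:ℝ) ^ (-m) := by
        intro m
        rw [hAapp]
        refine hKz m b fun y => ?_
        rw [← hTapp, hb]
        simpa using (zpow_pos hp0 (-m)).le
      by_contra h
      have hpos : 0 < ‖A b‖ := norm_pos_iff.mpr h
      obtain ⟨n, hn⟩ := exists_pow_lt_of_lt_one hpos (inv_lt_one_of_one_lt₀ hp1)
      have h1 : ((p:ℝ) ^ n)⁻¹ < ‖A b‖ := by rw [← inv_pow]; exact hn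
      have h2 : ‖A b‖ ≤ ((p:ℝ) ^ n)⁻¹ := by
        have := hz n
        rwa [zpow_neg, zpow_natCast] at this
      linarith
    set S : Submodule K C(ℤ_[p]ˣ, K) := LinearMap.range T with hSdef
    have hSspan : (S : Set C(ℤ_[p]ˣ, K)) = ↑(Submodule.span K (Set.range f)) := by
      rw [hSdef, hT, Finsupp.range_linearCombination]
    set φ₀ : S →ₗ[K] K :=
      ((LinearMap.ker T).liftQ A hker).comp
        (LinearMap.quotKerEquivRange T).symm.toLinearMap with hφ₀def
    have hφ₀ : ∀ b : I →₀ K, φ₀ ⟨T b, LinearMap.mem_range_self T b⟩ = A b := by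
      intro b
      rw [hφ₀def]
      simp only [LinearMap.comp_apply, LinearEquiv.coe_coe]
      rw [LinearMap.quotKerEquivRange_symm_apply_image]
      rfl
    have hφ₀b : ∀ s : S, ‖φ₀ s‖ ≤ (p:ℝ) * ‖(s : C(ℤ_[p]ˣ, K))‖ := by
      rintro ⟨g, hg⟩
      obtain ⟨b, rfl⟩ := hg
      have hval : φ₀ ⟨T b, LinearMap.mem_range_self T b⟩ = A b := hφ₀ b
      rw [show (⟨T b, LinearMap.mem_range_self T b⟩ : S) = ⟨T b, ⟨b, rfl⟩⟩ from rfl] at hval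
      rw [hval]
      rcases eq_or_ne (T b) 0 with h0 | h0
      · have hA0 : A b = 0 := hker (LinearMap.mem_ker.mpr h0)
        rw [hA0, norm_zero]
        positivity
      · have hr : 0 < ‖T b‖ := norm_pos_iff.mpr h0
        obtain ⟨n, hn1, hn2⟩ := exists_mem_Ico_zpow hr hp1
        have hb2 := hKz (-(n+1)) b (fun y => by
          rw [← hTapp, neg_neg]
          exact le_trans ((T b).norm_coe_le_norm y) (le_of_lt hn2))
        rw [neg_neg] at hb2
        calc ‖A b‖ = ‖∑ i ∈ b.support, b i * a i‖ := by rw [hAapp]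
          _ ≤ (p:ℝ) ^ (n+1) := hb2
          _ = (p:ℝ) * (p:ℝ) ^ n := by
              rw [zpow_add₀ (ne_of_gt hp0), zpow_one, mul_comm]
          _ ≤ (p:ℝ) * ‖T b‖ := mul_le_mul_of_nonneg_left hn1 hp0.le
    set φ : S →L[K] K := LinearMap.mkContinuous φ₀ (p:ℝ) hφ₀b with hφdef
    have h_e : IsUniformInducing (⇑(S.subtypeL)) := isometry_subtype_coe.isUniformInducing
    have h_dense : DenseRange (⇑(S.subtypeL)) := by
      have hr : Set.range (⇑(S.subtypeL)) = (S : Set C(ℤ_[p]ˣ, K)) := Subtype.range_coe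
      rw [DenseRange, hr, hSspan]
      exact hdense
    set μ := ContinuousLinearMap.extend φ S.subtypeL with hμdef
    have hμe : ∀ s : S, μ ((s : C(ℤ_[p]ˣ, K))) = φ₀ s := by
      intro s
      have h := ContinuousLinearMap.extend_eq φ (e := S.subtypeL) h_dense h_e s
      rw [Submodule.subtypeL_apply] at h
      rw [h]
      rfl
    refine ⟨μ.toLinearMap, ?_, ?_⟩
    · intro g hg
      have key : ∀ ε : ℝ, 0 < ε → ‖μ g‖ ≤ 1 + (‖μ‖ + 1) * ε := by
        intro ε hε
        set δ := min 1 ε with hδdef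
        have hδpos : 0 < δ := lt_min one_pos hε
        obtain ⟨s, hs⟩ := h_dense.exists_dist_lt g hδpos
        have hsg : ‖g - (s : C(ℤ_[p]ˣ, K))‖ < δ := by
          rw [← dist_eq_norm]
          simpa [Submodule.subtypeL_apply] using hs
        have hsy : ∀ y, ‖(s : C(ℤ_[p]ˣ, K)) y‖ ≤ 1 := by
          intro y
          have heq : (s : C(ℤ_[p]ˣ, K)) y = g y + ((s : C(ℤ_[p]ˣ, K)) - g) y := by simp
          rw [heq]
          refine le_trans (IsUltrametricDist.norm_add_le_max _ _) (max_le (hg y) ?_)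
          have h3 := ContinuousMap.norm_coe_le_norm ((s : C(ℤ_[p]ˣ, K)) - g) y
          have h4 : ‖(s : C(ℤ_[p]ˣ, K)) - g‖ = ‖g - (s : C(ℤ_[p]ˣ, K))‖ := norm_sub_rev _ _
          calc ‖((s : C(ℤ_[p]ˣ, K)) - g) y‖ ≤ ‖g - (s : C(ℤ_[p]ˣ, K))‖ := by rw [← h4]; exact h3
            _ ≤ δ := hsg.le
            _ ≤ 1 := min_le_left _ _
        obtain ⟨b, hb⟩ := s.2
        have h1 : ‖μ (s : C(ℤ_[p]ˣ, K))‖ ≤ 1 := by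
          rw [hμe s]
          rw [show s = ⟨T b, LinearMap.mem_range_self T b⟩ from Subtype.ext hb.symm, hφ₀ b]
          have h5 := hKz 0 b (fun y => by
            rw [← hTapp, hb]
            simpa using hsy y)
          rw [hAapp]
          simpa using h5
        have hgdec : g = (s : C(ℤ_[p]ˣ, K)) + (g - (s : C(ℤ_[p]ˣ, K))) := by abel
        calc ‖μ g‖ = ‖μ (s : C(ℤ_[p]ˣ, K)) + μ (g - (s : C(ℤ_[p]ˣ, K)))‖ := by
              rw [← map_add, ← hgdec]
          _ ≤ ‖μ (s : C(ℤ_[p]ˣ, K))‖ + ‖μ (g - (s : C(ℤ_[p]ˣ, K)))‖ := norm_add_le _ _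
          _ ≤ 1 + ‖μ‖ * ‖g - (s : C(ℤ_[p]ˣ, K))‖ := add_le_add h1 (μ.le_opNorm _)
          _ ≤ 1 + (‖μ‖ + 1) * ε := by
              have hδε : δ ≤ ε := min_le_right _ _
              have hμ0 : (0:ℝ) ≤ ‖μ‖ := norm_nonneg _
              nlinarith [hsg, norm_nonneg (g - (s : C(ℤ_[p]ˣ, K)))]
      refine le_of_forall_pos_le_add fun ε hε => ?_
      have hμp : (0:ℝ) < ‖μ‖ + 1 := by positivity
      calc ‖μ g‖ ≤ 1 + (‖μ‖ + 1) * (ε / (‖μ‖ + 1)) := key _ (by positivity)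
        _ = 1 + ε := by field_simp
    · intro i
      have hone : T (Finsupp.single i 1) = f i := by
        rw [hT, Finsupp.linearCombination_single, one_smul]
      have hmem : f i ∈ S := ⟨Finsupp.single i 1, hone⟩
      show μ (f i) = a i
      have h := hμe ⟨f i, hmem⟩
      have heq : (⟨f i, hmem⟩ : S) = ⟨T (Finsupp.single i 1), LinearMap.mem_range_self T _⟩ :=
        Subtype.ext hone.symm
      rw [heq, hφ₀] at h
      have hcoe : ((⟨T (Finsupp.single i 1), LinearMap.mem_range_self T _⟩ : S) :
          C(ℤ_[p]ˣ, K)) = f i := hone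
      rw [hcoe] at h
      rw [h, hA, Finsupp.linearCombination_single, one_smul]

/-- **abstract Kummer congruence criterion.** Let `{f_i}` be a dense
system of `O`-valued continuous functions in `C(ℤ_p^×, O_{ℂ_p})` and `{a_i} ⊆ O_{ℂ_p}`.
There exists a bounded `p`-adic measure `μ` (an `O`-bounded linear functional on
`C(ℤ_p^×, ℂ_p)`) with `∫ f_i dμ = a_i` for all `i` if and only if the Kummer
congruences hold: for every family `b_i ∈ ℂ_p`, almost all zero, if
`Σ b_i f_i(y) ∈ p^m O` for all `y ∈ ℤ_p^×` then `Σ b_i a_i ∈ p^m O`.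
Here `K` plays the role of `ℂ_p`: a complete algebraically closed nonarchimedean
valued extension of `ℚ_p`. -/
theorem stmt10 (p : ℕ) [Fact p.Prime] {K : Type*} [NormedField K]
    [IsUltrametricDist K] [CompleteSpace K] [Algebra ℚ_[p] K]
    (halg : IsAlgClosed K)
    (hnorm : ∀ x : ℚ_[p], ‖algebraMap ℚ_[p] K x‖ = ‖x‖)
    {I : Type*} (f : I → C(ℤ_[p]ˣ, K)) (a : I → K)
    (hf1 : ∀ i x, ‖f i x‖ ≤ 1) (ha1 : ∀ i, ‖a i‖ ≤ 1)
    (hdense : Dense (↑(Submodule.span K (Set.range f)) : Set C(ℤ_[p]ˣ, K))) :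
    (∃ μ : C(ℤ_[p]ˣ, K) →ₗ[K] K,
        (∀ g : C(ℤ_[p]ˣ, K), (∀ x, ‖g x‖ ≤ 1) → ‖μ g‖ ≤ 1) ∧ ∀ i, μ (f i) = a i)
    ↔ (∀ (m : ℕ) (b : I →₀ K),
        (∀ y : ℤ_[p]ˣ, ‖∑ i ∈ b.support, b i * f i y‖ ≤ (p : ℝ) ^ (-(m : ℤ))) →
        ‖∑ i ∈ b.support, b i * a i‖ ≤ (p : ℝ) ^ (-(m : ℤ))) := by
  have hp1 : (1:ℝ) < (p:ℝ) := by exact_mod_cast (Fact.out : p.Prime).one_lt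
  letI : NontriviallyNormedField K :=
    { (inferInstance : NormedField K) with
      non_trivial := ⟨algebraMap ℚ_[p] K ((p:ℚ_[p]) ^ (-1:ℤ)), by
        rw [hnorm, Padic.norm_p_zpow, neg_neg, zpow_one]; exact hp1⟩ }
  exact stmt10_aux p halg hnorm f a hf1 ha1 hdense
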